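/- Let $F(x)=\sum_{k>l}\log(x_k-x_l)$ on $\Delta_d$. Then $\partial F/\partial x_i(x)=\sum_{k\ne i}(x_i-x_k)^{-1}$ and $\partial^2 F/\partial x_i^2(x)=-\sum_{k\ne i}(x_i-x_k)^{-2}$; consequently the Laplacian of $F$ equals $-\sum_i\left(\sum_{k\ne i}(x_i-x_k)^{-1}\right)^2$, i.e. $\Delta F = -|\nabla F|^2$ on $\Delta_d$. -/

import Mathlib

open Finset

private lemma isOpen_chamber (d : ℕ) :
    IsOpen {y : Fin d → ℝ | ∀ i j : Fin d, i < j → y i < y j} := by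
  have : {y : Fin d → ℝ | ∀ i j : Fin d, i < j → y i < y j}
      = ⋂ (i : Fin d), ⋂ (j : Fin d), ⋂ (_ : i < j), {y : Fin d → ℝ | y i < y j} := by
    ext y; simp [Set.mem_iInter]
  rw [this]
  exact isOpen_iInter_of_finite fun i => isOpen_iInter_of_finite fun j =>
    isOpen_iInter_of_finite fun _ => isOpen_lt (continuous_apply i) (continuous_apply j)

private lemma hasFDerivAt_logsum {d : ℕ} (y : Fin d → ℝ)
    (hy : ∀ i j : Fin d, i < j → y i < y j) :
    HasFDerivAt (fun z : Fin d → ℝ => ∑ k, ∑ l ∈ Iio k, Real.log (z k - z l))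
      (∑ k, ∑ l ∈ Iio k, (y k - y l)⁻¹ •
        ((ContinuousLinearMap.proj (R := ℝ) (φ := fun _ : Fin d => ℝ) k)
          - (ContinuousLinearMap.proj l))) y := by
  apply HasFDerivAt.fun_sum; intro k _
  apply HasFDerivAt.fun_sum; intro l hl
  have hne : y k - y l ≠ 0 := sub_ne_zero.2 (ne_of_gt (hy l k (mem_Iio.mp hl)))
  have h1 : HasFDerivAt (fun z : Fin d → ℝ => z k - z l)
      (ContinuousLinearMap.proj (R := ℝ) (φ := fun _ : Fin d => ℝ) k
        - ContinuousLinearMap.proj l) y :=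
    ((ContinuousLinearMap.proj (R := ℝ) (φ := fun _ : Fin d => ℝ) k).hasFDerivAt).sub
      ((ContinuousLinearMap.proj (R := ℝ) (φ := fun _ : Fin d => ℝ) l).hasFDerivAt)
  exact (Real.hasDerivAt_log hne).comp_hasFDerivAt y h1

private lemma pair_sum {d : ℕ} (c : Fin d → Fin d → ℝ) (i : Fin d) :
    ∑ k, ∑ l ∈ Iio k, c k l * ((if k = i then (1:ℝ) else 0) - (if l = i then 1 else 0))
      = ∑ l ∈ Iio i, c i l - ∑ k ∈ Ioi i, c k i := by
  have h1 : ∀ k : Fin d, ∑ l ∈ Iio k, c k l * ((if k = i then (1:ℝ) else 0) - (if l = i then 1 else 0))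
      = (if k = i then ∑ l ∈ Iio k, c k l else 0) - (if i ∈ Iio k then c k i else 0) := by
    intro k
    simp only [mul_sub, Finset.sum_sub_distrib]
    congr 1
    · rcases eq_or_ne k i with rfl | hk
      · simp
      · simp [hk]
    · rw [← Finset.sum_ite_eq' (Iio k) i (fun l => c k l)]
      apply Finset.sum_congr rfl; intro l hl
      split <;> simp
  rw [Finset.sum_congr rfl fun k _ => h1 k, Finset.sum_sub_distrib,
    Finset.sum_ite_eq' univ i (fun k => ∑ l ∈ Iio k, c k l)]
  simp only [mem_univ, if_true]
  congr 1
  simp only [mem_Iio]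
  rw [← Finset.sum_filter]
  apply Finset.sum_congr _ fun _ _ => rfl
  ext k; simp [mem_Ioi]

private lemma erase_split {d : ℕ} (f : Fin d → ℝ) (i : Fin d) :
    ∑ k ∈ univ.erase i, f k = ∑ k ∈ Iio i, f k + ∑ k ∈ Ioi i, f k := by
  rw [← Finset.sum_union]
  · apply Finset.sum_congr _ fun _ _ => rfl
    ext k
    simp only [mem_union, mem_Iio, mem_Ioi, mem_erase, mem_univ, and_true]
    constructor
    · exact fun h => lt_or_gt_of_ne h
    · rintro (h | h); exacts [ne_of_lt h, ne_of_gt h]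
  · rw [Finset.disjoint_left]
    intro a ha ha'
    exact absurd (mem_Ioi.mp ha') (not_lt.2 (le_of_lt (mem_Iio.mp ha)))

private lemma fderiv_F_val {d : ℕ} (F : (Fin d → ℝ) → ℝ)
    (hF : ∀ y : Fin d → ℝ, F y = ∑ k, ∑ l ∈ Iio k, Real.log (y k - y l))
    (y : Fin d → ℝ) (hy : ∀ i j : Fin d, i < j → y i < y j) (i : Fin d) :
    fderiv ℝ F y (Pi.single i 1) = ∑ k ∈ univ.erase i, (y i - y k)⁻¹ := by
  have hFe : F = fun z => ∑ k, ∑ l ∈ Iio k, Real.log (z k - z l) := funext hF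
  rw [hFe, (hasFDerivAt_logsum y hy).fderiv]
  simp only [ContinuousLinearMap.sum_apply, ContinuousLinearMap.smul_apply,
    ContinuousLinearMap.sub_apply, ContinuousLinearMap.proj_apply, smul_eq_mul,
    Pi.single_apply]
  rw [pair_sum (fun k l => (y k - y l)⁻¹) i, erase_split (fun k => (y i - y k)⁻¹) i,
    sub_eq_add_neg, ← Finset.sum_neg_distrib]
  congr 1
  exact Finset.sum_congr rfl fun k _ => by rw [← inv_neg, neg_sub]

private lemma g_hasFDerivAt {d : ℕ} (x : Fin d → ℝ)
    (hx : ∀ i j : Fin d, i < j → x i < x j) (i : Fin d) :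
    HasFDerivAt (fun y : Fin d → ℝ => ∑ k ∈ univ.erase i, (y i - y k)⁻¹)
      (∑ k ∈ univ.erase i, (-(((x i - x k)) ^ 2)⁻¹) •
        ((ContinuousLinearMap.proj (R := ℝ) (φ := fun _ : Fin d => ℝ) i)
          - (ContinuousLinearMap.proj k))) x := by
  apply HasFDerivAt.fun_sum; intro k hk
  have hki : k ≠ i := (mem_erase.mp hk).1
  have hne : x i - x k ≠ 0 := by
    rcases lt_trichotomy i k with h | h | h
    · exact sub_ne_zero.2 (ne_of_lt (hx i k h))
    · exact absurd h.symm hki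
    · exact sub_ne_zero.2 (ne_of_gt (hx k i h))
  have h1 : HasFDerivAt (fun y : Fin d → ℝ => y i - y k)
      (ContinuousLinearMap.proj (R := ℝ) (φ := fun _ : Fin d => ℝ) i
        - ContinuousLinearMap.proj k) x :=
    ((ContinuousLinearMap.proj (R := ℝ) (φ := fun _ : Fin d => ℝ) i).hasFDerivAt).sub
      ((ContinuousLinearMap.proj (R := ℝ) (φ := fun _ : Fin d => ℝ) k).hasFDerivAt)
  exact (hasDerivAt_inv hne).comp_hasFDerivAt x h1

private lemma second_deriv_val {d : ℕ} (F : (Fin d → ℝ) → ℝ)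
    (hF : ∀ y : Fin d → ℝ, F y = ∑ k, ∑ l ∈ Iio k, Real.log (y k - y l))
    (x : Fin d → ℝ) (hx : ∀ i j : Fin d, i < j → x i < x j) (i : Fin d) :
    fderiv ℝ (fun y => fderiv ℝ F y (Pi.single i 1)) x (Pi.single i 1)
      = -∑ k ∈ univ.erase i, ((x i - x k) ^ 2)⁻¹ := by
  have hev : (fun y => fderiv ℝ F y (Pi.single i 1))
      =ᶠ[nhds x] (fun y : Fin d → ℝ => ∑ k ∈ univ.erase i, (y i - y k)⁻¹) := by
    refine Filter.eventuallyEq_of_mem ((isOpen_chamber d).mem_nhds hx) ?_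
    intro y hy
    exact fderiv_F_val F hF y hy i
  rw [hev.fderiv_eq, (g_hasFDerivAt x hx i).fderiv]
  simp only [ContinuousLinearMap.sum_apply, ContinuousLinearMap.smul_apply,
    ContinuousLinearMap.sub_apply, ContinuousLinearMap.proj_apply, smul_eq_mul,
    Pi.single_apply]
  rw [← Finset.sum_neg_distrib]
  refine Finset.sum_congr rfl fun k hk => ?_
  have hki : k ≠ i := (mem_erase.mp hk).1
  simp [hki]

private def S (d : ℕ) : Finset (Fin d × Fin d × Fin d) :=
  univ.filter (fun p => p.1 ≠ p.2.1 ∧ p.1 ≠ p.2.2 ∧ p.2.1 ≠ p.2.2)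

private lemma T_eq {d : ℕ} (x : Fin d → ℝ) :
    ∑ i, ∑ k ∈ univ.erase i, ∑ k' ∈ (univ.erase i).erase k, (x i - x k)⁻¹ * (x i - x k')⁻¹
    = ∑ p ∈ S d, (x p.1 - x p.2.1)⁻¹ * (x p.1 - x p.2.2)⁻¹ := by
  rw [S, Finset.sum_filter]
  simp only [Fintype.sum_prod_type]
  refine Finset.sum_congr rfl fun i _ => ?_
  have inner : ∀ k ∈ univ.erase i,
      (∑ k' : Fin d, if i ≠ k ∧ i ≠ k' ∧ k ≠ k' then (x i - x k)⁻¹ * (x i - x k')⁻¹ else 0)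
      = ∑ k' ∈ (univ.erase i).erase k, (x i - x k)⁻¹ * (x i - x k')⁻¹ := by
    intro k hk
    rw [← Finset.sum_subset (Finset.subset_univ ((univ.erase i).erase k))]
    · refine Finset.sum_congr rfl fun k' hk' => ?_
      simp only [mem_erase, mem_univ, and_true] at hk hk'
      rw [if_pos ⟨Ne.symm hk, Ne.symm hk'.2, Ne.symm hk'.1⟩]
    · intro k' _ hk'
      simp only [mem_erase, mem_univ, and_true, not_and_or, not_not] at hk'
      rcases hk' with rfl | rfl
      · simp
      · simp
  rw [← Finset.sum_subset (Finset.subset_univ (univ.erase i))]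
  · exact Finset.sum_congr rfl fun k hk => (inner k hk).symm
  · intro k _ hk
    simp only [mem_erase, mem_univ, and_true, not_not] at hk
    subst hk
    simp

private lemma cyc_sum {d : ℕ} (f : Fin d × Fin d × Fin d → ℝ) :
    ∑ p ∈ S d, f p = ∑ p ∈ S d, f (p.2.1, p.2.2, p.1) := by
  refine Finset.sum_nbij' (fun p => (p.2.2, p.1, p.2.1)) (fun p => (p.2.1, p.2.2, p.1))
    ?_ ?_ ?_ ?_ ?_
  · rintro ⟨a, b, c⟩ hp; simp only [S, mem_filter, mem_univ, true_and] at hp ⊢; tauto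
  · rintro ⟨a, b, c⟩ hp; simp only [S, mem_filter, mem_univ, true_and] at hp ⊢; tauto
  · rintro ⟨a, b, c⟩ _; rfl
  · rintro ⟨a, b, c⟩ _; rfl
  · rintro ⟨a, b, c⟩ _; rfl

private lemma three_term (A B C : ℝ) (hAB : A ≠ B) (hAC : A ≠ C) (hBC : B ≠ C) :
    (A - B)⁻¹ * (A - C)⁻¹ + ((B - C)⁻¹ * (B - A)⁻¹ + (C - A)⁻¹ * (C - B)⁻¹) = 0 := by
  have h1 : A - B ≠ 0 := sub_ne_zero.2 hAB
  have h2 : A - C ≠ 0 := sub_ne_zero.2 hAC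
  have h3 : B - C ≠ 0 := sub_ne_zero.2 hBC
  have h4 : B - A ≠ 0 := sub_ne_zero.2 (Ne.symm hAB)
  have h5 : C - A ≠ 0 := sub_ne_zero.2 (Ne.symm hAC)
  have h6 : C - B ≠ 0 := sub_ne_zero.2 (Ne.symm hBC)
  field_simp
  ring

private lemma T_zero {d : ℕ} (x : Fin d → ℝ) (hne : ∀ i j : Fin d, i ≠ j → x i ≠ x j) :
    ∑ p ∈ S d, (x p.1 - x p.2.1)⁻¹ * (x p.1 - x p.2.2)⁻¹ = 0 := by
  set f : Fin d × Fin d × Fin d → ℝ := fun p => (x p.1 - x p.2.1)⁻¹ * (x p.1 - x p.2.2)⁻¹ with hf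
  set T := ∑ p ∈ S d, f p with hT
  have e1 : T = ∑ p ∈ S d, f (p.2.1, p.2.2, p.1) := cyc_sum f
  have e2 : T = ∑ p ∈ S d, f (p.2.2, p.1, p.2.1) := by
    rw [e1]; exact cyc_sum (fun p => f (p.2.1, p.2.2, p.1))
  have h3 : T + T + T = 0 := by
    nth_rewrite 2 [e1]
    nth_rewrite 2 [e2]
    rw [← Finset.sum_add_distrib, ← Finset.sum_add_distrib]
    apply Finset.sum_eq_zero
    rintro ⟨a, b, c⟩ hp
    simp only [S, mem_filter, mem_univ, true_and] at hp
    obtain ⟨hab, hac, hbc⟩ := hp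
    rw [add_assoc]
    exact three_term (x a) (x b) (x c) (hne a b hab) (hne a c hac) (hne b c hbc)
  linarith

private lemma key_identity {d : ℕ} (x : Fin d → ℝ)
    (hne : ∀ i j : Fin d, i ≠ j → x i ≠ x j) :
    ∑ i, (∑ k ∈ univ.erase i, (x i - x k)⁻¹) ^ 2
      = ∑ i, ∑ k ∈ univ.erase i, ((x i - x k) ^ 2)⁻¹ := by
  have expand : ∀ i : Fin d, (∑ k ∈ univ.erase i, (x i - x k)⁻¹) ^ 2
      = ∑ k ∈ univ.erase i, ((x i - x k) ^ 2)⁻¹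
        + ∑ k ∈ univ.erase i, ∑ k' ∈ (univ.erase i).erase k, (x i - x k)⁻¹ * (x i - x k')⁻¹ := by
    intro i
    rw [sq, Finset.sum_mul_sum, ← Finset.sum_add_distrib]
    refine Finset.sum_congr rfl fun k hk => ?_
    rw [← Finset.add_sum_erase _ (fun k' => (x i - x k)⁻¹ * (x i - x k')⁻¹) hk]
    congr 1
    rw [sq, mul_inv]
  rw [Finset.sum_congr rfl fun i _ => expand i, Finset.sum_add_distrib, T_eq x, T_zero x hne,
    add_zero]

theorem log_vandermonde_derivatives (d : ℕ)
    (F : (Fin d → ℝ) → ℝ)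
    (hF : ∀ y : Fin d → ℝ, F y = ∑ k, ∑ l ∈ Iio k, Real.log (y k - y l))
    (x : Fin d → ℝ) (hx : ∀ i j : Fin d, i < j → x i < x j) :
    (∀ i : Fin d, fderiv ℝ F x (Pi.single i 1)
        = ∑ k ∈ univ.erase i, (x i - x k)⁻¹) ∧
    (∀ i : Fin d, fderiv ℝ (fun y => fderiv ℝ F y (Pi.single i 1)) x (Pi.single i 1)
        = -∑ k ∈ univ.erase i, ((x i - x k) ^ 2)⁻¹) ∧
    ∑ i, fderiv ℝ (fun y => fderiv ℝ F y (Pi.single i 1)) x (Pi.single i 1)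
        = -∑ i, (∑ k ∈ univ.erase i, (x i - x k)⁻¹) ^ 2 := by
  have hne : ∀ i j : Fin d, i ≠ j → x i ≠ x j := by
    intro i j hij
    rcases lt_trichotomy i j with h | h | h
    · exact ne_of_lt (hx i j h)
    · exact absurd h hij
    · exact ne_of_gt (hx j i h)
  refine ⟨fun i => fderiv_F_val F hF x hx i, fun i => second_deriv_val F hF x hx i, ?_⟩
  rw [Finset.sum_congr rfl fun i _ => second_deriv_val F hF x hx i, Finset.sum_neg_distrib,
    key_identity x hne]
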